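/- Let M be a contract, let a be an interior point of A, and let r* ∈ R(a;M). If the functions a' ↦ T(a';M) and a' ↦ u_A(a',r*) are both differentiable at a, then the derivative of a' ↦ T(a';M) at a equals ∂₁u_A(a,r*), the partial derivative of u_A in its first argument evaluated at (a,r*). -/

import Mathlib

open MeasureTheory Set

/-- The agent's value of optimally choosing a plan from contract `M` given outsider action `r`:
`V(r;M) = max_{(a,t) ∈ M} (u_A(a,r) - t)`. -/
noncomputable def Vfun (uA : ℝ → ℝ → ℝ) (M : Set (ℝ × ℝ)) (r : ℝ) : ℝ :=
  sSup ((fun p : ℝ × ℝ => uA p.1 r - p.2) '' M)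

/-- The dual transfer `T(a;M) = max_{r ∈ R} (u_A(a,r) - V(r;M))`. -/
noncomputable def Tfun (uA : ℝ → ℝ → ℝ) (R : Set ℝ) (M : Set (ℝ × ℝ)) (a : ℝ) : ℝ :=
  sSup ((fun r => uA a r - Vfun uA M r) '' R)

/-- The set of dual replies `R(a;M)`: maximizers of `r ↦ u_A(a,r) - V(r;M)` over `R`. -/
def dualReplies (uA : ℝ → ℝ → ℝ) (R : Set ℝ) (M : Set (ℝ × ℝ)) (a : ℝ) : Set ℝ :=
  {r | r ∈ R ∧ uA a r - Vfun uA M r = Tfun uA R M a}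

/-- A contract is a nonempty compact subset of `A × ℝ` where `A = [a₀, ā]`. -/
def IsContract (a0 abar : ℝ) (M : Set (ℝ × ℝ)) : Prop :=
  M.Nonempty ∧ IsCompact M ∧ M ⊆ (Set.Icc a0 abar) ×ˢ (Set.univ : Set ℝ)

/-- Envelope theorem for the dual transfer: if `a` is interior, `r* ∈ R(a;M)`,
and both `T(·;M)` and `u_A(·,r*)` are differentiable at `a`, then the derivative of `T(·;M)`
at `a` equals `∂₁u_A(a,r*)`. -/
theorem stmt3 (a0 abar rlo rhi : ℝ) (hA : a0 < abar) (hR : rlo < rhi)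
    (uA : ℝ → ℝ → ℝ) (huA : Continuous fun p : ℝ × ℝ => uA p.1 p.2)
    (M : Set (ℝ × ℝ)) (hM : IsContract a0 abar M)
    (a : ℝ) (haInt : a ∈ Set.Ioo a0 abar)
    (rstar : ℝ) (hrstar : rstar ∈ dualReplies uA (Set.Icc rlo rhi) M a)
    (hTdiff : DifferentiableAt ℝ (Tfun uA (Set.Icc rlo rhi) M) a)
    (hudiff : DifferentiableAt ℝ (fun x => uA x rstar) a) :
    deriv (Tfun uA (Set.Icc rlo rhi) M) a = deriv (fun x => uA x rstar) a := by
  obtain ⟨hMne, hMcomp, hMsub⟩ := hM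
  obtain ⟨p0, hp0⟩ := hMne
  -- lower bound on V
  have hVlb : ∀ r : ℝ, uA p0.1 r - p0.2 ≤ Vfun uA M r := by
    intro r
    apply le_csSup
    · have hc : Continuous fun p : ℝ × ℝ => uA p.1 r - p.2 :=
        (huA.comp (continuous_fst.prodMk continuous_const)).sub continuous_snd
      exact (hMcomp.image hc).bddAbove
    · exact ⟨p0, hp0, rfl⟩
  -- key: for every x, uA x rstar - V rstar ≤ T x
  have hkey : ∀ x : ℝ, uA x rstar - Vfun uA M rstar ≤ Tfun uA (Set.Icc rlo rhi) M x := by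
    intro x
    apply le_csSup
    · -- bounded above
      have cx : ∀ y : ℝ, Continuous (uA y) := fun y =>
        huA.comp (continuous_const.prodMk continuous_id)
      have hcont : ContinuousOn (fun r => uA x r - (uA p0.1 r - p0.2)) (Set.Icc rlo rhi) :=
        (((cx x).sub ((cx p0.1).sub continuous_const))).continuousOn
      obtain ⟨C, hC⟩ := (isCompact_Icc.image_of_continuousOn hcont).bddAbove
      refine ⟨C, ?_⟩
      rintro y ⟨r, hr, rfl⟩
      calc uA x r - Vfun uA M r ≤ uA x r - (uA p0.1 r - p0.2) := by
            have := hVlb r; linarith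
        _ ≤ C := hC ⟨r, hr, rfl⟩
    · exact ⟨rstar, hrstar.1, rfl⟩
  -- h := T - (uA · rstar - V rstar) has global min 0 at a
  set h : ℝ → ℝ := fun x => Tfun uA (Set.Icc rlo rhi) M x - (uA x rstar - Vfun uA M rstar)
    with hh
  have hmin : IsLocalMin h a := by
    apply Filter.Eventually.of_forall
    intro x
    have h1 := hkey x
    have h2 : h a = 0 := by simp [hh, hrstar.2]
    simp only [hh] at h2 ⊢
    linarith
  have hhdiff : DifferentiableAt ℝ h a := by
    exact hTdiff.sub (hudiff.sub_const _)
  have hd0 : deriv h a = 0 := hmin.deriv_eq_zero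
  have : deriv h a = deriv (Tfun uA (Set.Icc rlo rhi) M) a
      - deriv (fun x => uA x rstar) a := by
    rw [hh]
    rw [deriv_fun_sub hTdiff (hudiff.sub_const _)]
    simp [deriv_sub_const]
  linarith [this, hd0]
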